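/- Let E = EuclideanSpace ℝ (Fin n), let τ > 0 and m ≠ 0 be real numbers, and define f : E → ℝ by f(x) = m · log(τ + ‖x‖²). Then for every point x and all vectors v, w one has (fderiv ℝ (fderiv ℝ f) x v) w + (1/m) · (fderiv ℝ f x v) · (fderiv ℝ f x w) = (2m/(τ + ‖x‖²)) · ⟪v, w⟫. Consequently, since flat Euclidean space has vanishing Ricci curvature, (ℝⁿ, g₀, ∇u, m/u, λ) with u = e^{f/m} = τ + ‖x‖² and λ(x) = 2m/(τ + ‖x‖²) is a nontrivial gradient (m/u)-almost Ricci soliton. -/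

import Mathlib

open RealInnerProductSpace

theorem log_potential_soliton (n : ℕ) (τ m : ℝ) (hτ : 0 < τ) (hm : m ≠ 0)
    (f : EuclideanSpace ℝ (Fin n) → ℝ)
    (hf : ∀ x, f x = m * Real.log (τ + ‖x‖ ^ 2))
    (x v w : EuclideanSpace ℝ (Fin n)) :
    (fderiv ℝ (fderiv ℝ f) x v) w
        + (1 / m) * (fderiv ℝ f x v) * (fderiv ℝ f x w)
      = (2 * m / (τ + ‖x‖ ^ 2)) * ⟪v, w⟫ := by
  have hfe : f = fun z => m * Real.log (τ + ‖z‖ ^ 2) := funext hf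
  subst hfe
  have hqpos : ∀ y : EuclideanSpace ℝ (Fin n), 0 < τ + ‖y‖ ^ 2 := fun y =>
    lt_of_lt_of_le hτ (le_add_of_nonneg_right (sq_nonneg _))
  have hqne : ∀ y : EuclideanSpace ℝ (Fin n), τ + ‖y‖ ^ 2 ≠ 0 := fun y => (hqpos y).ne'
  -- derivative of q y = τ + ‖y‖²
  have hq : ∀ y : EuclideanSpace ℝ (Fin n),
      HasFDerivAt (fun z : EuclideanSpace ℝ (Fin n) => τ + ‖z‖ ^ 2)
        ((2 : ℝ) • innerSL ℝ y) y := by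
    intro y
    have h := (hasStrictFDerivAt_norm_sq y).hasFDerivAt.const_add τ
    refine h.congr_fderiv ?_
    ext u
    simp
  -- first derivative of f
  have hF : ∀ y, HasFDerivAt (fun z : EuclideanSpace ℝ (Fin n) => m * Real.log (τ + ‖z‖ ^ 2))
      ((2 * m / (τ + ‖y‖ ^ 2)) • innerSL ℝ y) y := by
    intro y
    have hlog : HasDerivAt Real.log (τ + ‖y‖ ^ 2)⁻¹ (τ + ‖y‖ ^ 2) :=
      Real.hasDerivAt_log (hqne y)
    have h1 := (hlog.comp_hasFDerivAt y (hq y)).const_mul m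
    refine h1.congr_fderiv ?_
    ext u
    simp only [ContinuousLinearMap.smul_apply, innerSL_apply_apply, smul_eq_mul]
    field_simp
  have hD : fderiv ℝ (fun z : EuclideanSpace ℝ (Fin n) => m * Real.log (τ + ‖z‖ ^ 2))
      = fun y => (2 * m / (τ + ‖y‖ ^ 2)) • innerSL ℝ y := funext fun y => (hF y).fderiv
  -- derivative of the coefficient c y = 2m / (τ + ‖y‖²)
  have hc : HasDerivAt (fun t : ℝ => 2 * m / t) (2 * m * -((τ + ‖x‖ ^ 2) ^ 2)⁻¹)
      (τ + ‖x‖ ^ 2) := by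
    simpa [div_eq_mul_inv] using (hasDerivAt_inv (hqne x)).const_mul (2 * m)
  have hcc : HasFDerivAt (fun y : EuclideanSpace ℝ (Fin n) => 2 * m / (τ + ‖y‖ ^ 2))
      ((2 * m * -((τ + ‖x‖ ^ 2) ^ 2)⁻¹) • ((2 : ℝ) • innerSL ℝ x)) x :=
    hc.comp_hasFDerivAt x (hq x)
  -- second derivative
  have hinner : HasFDerivAt (fun y : EuclideanSpace ℝ (Fin n) => innerSL ℝ y)
      (innerSL ℝ : EuclideanSpace ℝ (Fin n) →L[ℝ] EuclideanSpace ℝ (Fin n) →L[ℝ] ℝ) x :=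
    (innerSL ℝ : EuclideanSpace ℝ (Fin n) →L[ℝ] EuclideanSpace ℝ (Fin n) →L[ℝ] ℝ).hasFDerivAt
  have hG := hcc.smul hinner
  rw [hD]
  erw [hG.fderiv]
  simp only [ContinuousLinearMap.add_apply, ContinuousLinearMap.smul_apply,
    ContinuousLinearMap.smulRight_apply, innerSL_apply_apply, smul_eq_mul]
  erw [innerSL_apply_apply]
  have h1 := hqne x
  have hinner_symm : inner ℝ x v = inner ℝ v x := real_inner_comm v x
  field_simp
  ring
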